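/- There is no empty 6-circuit with at least 3 faces in which the spanning face f_e shares edges with only one other face. -/

import Mathlib

/-- A combinatorial map (connected graph cellularly embedded in an orientable surface),
given by a set of darts `D`, the edge involution `σ` and the rotation `ρ`. -/
structure CombMap where
  D : Type
  fin : Finite D
  σ : Equiv.Perm D
  ρ : Equiv.Perm D
  σ_invol : ∀ d, σ (σ d) = d
  σ_fixfree : ∀ d, σ d ≠ d
  conn : ∀ d d' : D, ∃ g ∈ Subgroup.closure ({σ, ρ} : Set (Equiv.Perm D)), g d = d'

attribute [instance] CombMap.fin

namespace CombMap

variable (M : CombMap)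

/-- The face permutation. -/
def φ : Equiv.Perm M.D := M.ρ * M.σ

def vSetoid : Setoid M.D :=
  ⟨M.ρ.SameCycle, ⟨fun _ => Equiv.Perm.SameCycle.refl _ _,
    Equiv.Perm.SameCycle.symm, Equiv.Perm.SameCycle.trans⟩⟩

def eSetoid : Setoid M.D :=
  ⟨M.σ.SameCycle, ⟨fun _ => Equiv.Perm.SameCycle.refl _ _,
    Equiv.Perm.SameCycle.symm, Equiv.Perm.SameCycle.trans⟩⟩

def fSetoid : Setoid M.D :=
  ⟨M.φ.SameCycle, ⟨fun _ => Equiv.Perm.SameCycle.refl _ _,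
    Equiv.Perm.SameCycle.symm, Equiv.Perm.SameCycle.trans⟩⟩

/-- Vertices are orbits of `ρ`. -/
def Vertex := Quotient M.vSetoid
/-- Edges are orbits of `σ`. -/
def Edge := Quotient M.eSetoid
/-- Faces are orbits of `φ`. -/
def Face := Quotient M.fSetoid

instance : Finite M.Vertex := Quotient.finite _
instance : Finite M.Edge := Quotient.finite _
instance : Finite M.Face := Quotient.finite _

def vtx (d : M.D) : M.Vertex := Quotient.mk M.vSetoid d
def edg (d : M.D) : M.Edge := Quotient.mk M.eSetoid d
def fce (d : M.D) : M.Face := Quotient.mk M.fSetoid d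

noncomputable def nV : ℕ := Nat.card M.Vertex
noncomputable def nE : ℕ := Nat.card M.Edge
noncomputable def nF : ℕ := Nat.card M.Face

/-- The size of a face: the length of its facial walk, i.e. the number of darts in it. -/
noncomputable def faceSize (f : M.Face) : ℕ := Nat.card {d : M.D // M.fce d = f}

/-- The degree of a vertex: the number of darts emanating from it. -/
noncomputable def degree (v : M.Vertex) : ℕ := Nat.card {d : M.D // M.vtx d = v}

/-- The face excess `Σ_f (d(f) - 3)`. -/
noncomputable def faceExcess : ℤ := ∑ᶠ f : M.Face, ((M.faceSize f : ℤ) - 3)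

/-- The underlying graph of the map is simple: no loops, no multiple edges. -/
def Simple : Prop :=
  (∀ d, M.vtx d ≠ M.vtx (M.σ d)) ∧
  ∀ d d', M.vtx d = M.vtx d' → M.vtx (M.σ d) = M.vtx (M.σ d') → M.edg d = M.edg d'

/-- The dual has no loops. -/
def DualLoopFree : Prop := ∀ d, M.fce d ≠ M.fce (M.σ d)

/-- The dual is simple: no loops and no multiple edges. -/
def DualSimple : Prop :=
  M.DualLoopFree ∧
  ∀ d d', M.fce d = M.fce d' → M.fce (M.σ d) = M.fce (M.σ d') → M.edg d = M.edg d'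

/-- The underlying simple graph on the vertices of the map. -/
def graph : SimpleGraph M.Vertex :=
  SimpleGraph.fromRel (fun a b => ∃ d, M.vtx d = a ∧ M.vtx (M.σ d) = b)

/-- The underlying simple graph of the dual map, on the faces of the map. -/
def dualGraph : SimpleGraph M.Face :=
  SimpleGraph.fromRel (fun a b => ∃ d, M.fce d = a ∧ M.fce (M.σ d) = b)

/-- Vertex `v` lies on the face `f`. -/
def VertexOnFace (v : M.Vertex) (f : M.Face) : Prop := ∃ d, M.fce d = f ∧ M.vtx d = v

/-- Faces `f` and `f'` share an edge. -/
def FaceAdj (f f' : M.Face) : Prop := ∃ d, M.fce d = f ∧ M.fce (M.σ d) = f'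

end CombMap

/-- `k`-connectivity of a graph: more than `k` vertices, and removing fewer than `k`
vertices never disconnects it. -/
def KConn {α : Type} (H : SimpleGraph α) (k : ℕ) : Prop :=
  k < Nat.card α ∧ ∀ S : Set α, S.ncard < k → (H.induce Sᶜ).Connected

namespace CombMap

variable (M : CombMap)

/-- An empty `k`-circuit: a map on at most `k` vertices with a spanning face `f_e` of
size `k`, whose underlying graph is simple, whose dual has no loops, and all of whose
dual multi-edges are incident with `f_e`. -/
def IsEmptyCircuit (k : ℕ) (fe : M.Face) : Prop :=
  M.nV ≤ k ∧ M.faceSize fe = k ∧ (∀ v : M.Vertex, M.VertexOnFace v fe) ∧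
  M.Simple ∧ M.DualLoopFree ∧
  ∀ d d', M.fce d = M.fce d' → M.fce (M.σ d) = M.fce (M.σ d') → M.edg d ≠ M.edg d' →
    (M.fce d = fe ∨ M.fce (M.σ d) = fe)

/-- An empty `k`-pair: a map on at most `k` vertices with two spanning faces
`f_e, f_e'` with `d(f_e)+d(f_e') = k` not sharing an edge, whose underlying graph is
simple, whose dual has no loops, and all of whose dual multi-edges are incident with
`f_e` or `f_e'`. -/
def IsEmptyPair (k : ℕ) (fe fe' : M.Face) : Prop :=
  M.nV ≤ k ∧ fe ≠ fe' ∧ M.faceSize fe + M.faceSize fe' = k ∧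
  (∀ v : M.Vertex, M.VertexOnFace v fe ∨ M.VertexOnFace v fe') ∧
  ¬ M.FaceAdj fe fe' ∧
  M.Simple ∧ M.DualLoopFree ∧
  ∀ d d', M.fce d = M.fce d' → M.fce (M.σ d) = M.fce (M.σ d') → M.edg d ≠ M.edg d' →
    (M.fce d = fe ∨ M.fce d = fe' ∨ M.fce (M.σ d) = fe ∨ M.fce (M.σ d) = fe')

end CombMap

namespace CombMap
variable {M : CombMap}

lemma fce_rho_sigma (d : M.D) : M.fce (M.ρ (M.σ d)) = M.fce d :=
  (Quotient.sound (⟨1, by simp [CombMap.φ, Equiv.Perm.mul_apply]⟩ :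
    M.fSetoid.r d (M.ρ (M.σ d)))).symm

lemma fce_sigma_rho_inv (d : M.D) : M.fce (M.σ (M.ρ⁻¹ d)) = M.fce d := by
  have := fce_rho_sigma (M := M) (M.σ (M.ρ⁻¹ d))
  rw [M.σ_invol, (Equiv.Perm.eq_inv_iff_eq.mp rfl : M.ρ (M.ρ⁻¹ d) = d)] at this
  exact this.symm

lemma vtx_rho (d : M.D) : M.vtx (M.ρ d) = M.vtx d :=
  Quotient.sound (⟨-1, by simp⟩ : M.vSetoid.r (M.ρ d) d)

lemma vtx_rho_inv (d : M.D) : M.vtx (M.ρ⁻¹ d) = M.vtx d := by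
  have := vtx_rho (M := M) (M.ρ⁻¹ d)
  rw [(Equiv.Perm.eq_inv_iff_eq.mp rfl : M.ρ (M.ρ⁻¹ d) = d)] at this
  exact this.symm

lemma vtx_exists_pow (d d' : M.D) (h : M.vtx d = M.vtx d') :
    ∃ n : ℕ, (M.ρ ^ n) d = d' := by
  have hs : M.ρ.SameCycle d d' := Quotient.exact h
  obtain ⟨i, _, hi⟩ := hs.exists_pow_eq'
  exact ⟨i, hi⟩

lemma edg_cases (d d' : M.D) (h : M.edg d = M.edg d') : d' = d ∨ d' = M.σ d := by
  have hs : M.σ.SameCycle d d' := Quotient.exact h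
  obtain ⟨i, _, hi⟩ := hs.exists_pow_eq'
  have key : ∀ n : ℕ, (M.σ ^ n) d = d ∨ (M.σ ^ n) d = M.σ d := by
    intro n
    induction n with
    | zero => exact Or.inl rfl
    | succ n ih =>
      rcases ih with h | h
      · right; rw [pow_succ', Equiv.Perm.mul_apply, h]
      · left; rw [pow_succ', Equiv.Perm.mul_apply, h, M.σ_invol]
  rw [← hi]
  exact key i

end CombMap
namespace CombMap
variable {M : CombMap}

lemma phi_apply (d : M.D) : M.φ d = M.ρ (M.σ d) := rfl

lemma fce_phi (d : M.D) : M.fce (M.φ d) = M.fce d := fce_rho_sigma d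

/-- two darts with same endpoints are equal -/
lemma ends_inj (hs : M.Simple) {d d' : M.D} (h1 : M.vtx d = M.vtx d')
    (h2 : M.vtx (M.σ d) = M.vtx (M.σ d')) : d = d' := by
  have he := hs.2 d d' h1 h2
  rcases edg_cases d d' he with h | h
  · exact h.symm
  · exfalso
    apply hs.1 d
    rw [← h, h1]

lemma phi_ne (hs : M.Simple) (d : M.D) : M.φ d ≠ d := by
  intro h
  apply hs.1 d
  have : M.vtx (M.ρ (M.σ d)) = M.vtx (M.σ d) := vtx_rho _
  rw [← phi_apply, h] at this
  exact this

lemma phi_phi_ne (hs : M.Simple) (hl : M.DualLoopFree) (d : M.D) :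
    M.φ (M.φ d) ≠ d := by
  intro h
  have h1 : M.ρ (M.σ (M.φ d)) = d := by rw [← phi_apply]; exact h
  have hv1 : M.vtx d = M.vtx (M.σ (M.φ d)) := by
    conv_lhs => rw [← h1]
    exact vtx_rho _
  have hv2 : M.vtx (M.σ d) = M.vtx (M.σ (M.σ (M.φ d))) := by
    rw [M.σ_invol, phi_apply]
    exact (vtx_rho _).symm
  have := ends_inj hs hv1 hv2
  -- d = σ (φ d), hence φ d = σ d
  have h2 : M.φ d = M.σ d := by
    conv_rhs => rw [this, M.σ_invol]
  apply hl d
  rw [← h2, fce_phi]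

end CombMap
namespace CombMap
variable {M : CombMap} {fe f : M.Face}

lemma rho_fe (honly : ∀ d, M.fce d = fe → M.fce (M.σ d) = f)
    {d : M.D} (hd : M.fce d = fe) : M.fce (M.ρ d) = f := by
  have h := fce_rho_sigma (M := M) (M.σ d)
  rw [M.σ_invol] at h
  rw [h]
  exact honly d hd

lemma rho_inv_fe (honly : ∀ d, M.fce d = fe → M.fce (M.σ d) = f)
    {d : M.D} (hd : M.fce d = fe) : M.fce (M.ρ⁻¹ d) = f := by
  have h1 : M.fce (M.σ (M.ρ⁻¹ d)) = fe := by rw [fce_sigma_rho_inv]; exact hd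
  have h2 := honly _ h1
  rwa [M.σ_invol] at h2

lemma sigma_fe (honly : ∀ d, M.fce d = fe → M.fce (M.σ d) = f)
    {d : M.D} (hd : M.fce (M.σ d) = fe) : M.fce d = f := by
  have h2 := honly _ hd
  rwa [M.σ_invol] at h2

lemma claimC (hnV : M.nV ≤ 6)
    (hspan : ∀ v : M.Vertex, M.VertexOnFace v fe)
    (hsimp : M.Simple)
    (honly : ∀ d, M.fce d = fe → M.fce (M.σ d) = f)
    (hfef : fe ≠ f)
    {y : M.D} (hy1 : M.fce y ≠ fe) (hy2 : M.fce y ≠ f)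
    (hy3 : M.fce (M.σ y) ≠ fe) (hy4 : M.fce (M.σ y) ≠ f) :
    M.fce (M.ρ⁻¹ y) = f := by
  classical
  by_contra hx
  set x := M.ρ⁻¹ y with hxdef
  have hrx : M.ρ x = y := Equiv.Perm.eq_inv_iff_eq.mp rfl
  have hxfe : M.fce x ≠ fe := by
    intro h
    apply hy2
    rw [← hrx]
    exact rho_fe honly h
  have hsx : M.fce (M.σ x) = M.fce y := fce_sigma_rho_inv y
  obtain ⟨a, ha, hav⟩ := hspan (M.vtx y)
  have hra : M.fce (M.ρ a) = f := rho_fe honly ha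
  have hria : M.fce (M.ρ⁻¹ a) = f := rho_inv_fe honly ha
  have hry : M.fce (M.ρ y) = M.fce (M.σ y) := by
    have h := fce_rho_sigma (M := M) (M.σ y)
    rwa [M.σ_invol] at h
  -- key orbit fact
  have hkey : ∀ z : M.D, M.fce z = fe → M.vtx z = M.vtx y → M.ρ (M.ρ z) ≠ z := by
    intro z hz hvz h2
    have horb : ∀ n : ℕ, (M.ρ ^ n) z = z ∨ (M.ρ ^ n) z = M.ρ z := by
      intro n
      induction n with
      | zero => exact Or.inl rfl
      | succ n ih =>
        rcases ih with h | h
        · right; rw [pow_succ', Equiv.Perm.mul_apply, h]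
        · left; rw [pow_succ', Equiv.Perm.mul_apply, h, h2]
    obtain ⟨n, hn⟩ := vtx_exists_pow z y hvz
    rcases horb n with h | h <;> rw [hn] at h
    · exact hy1 (h ▸ hz)
    · apply hy2
      rw [h]
      exact rho_fe honly hz
  have hkey2 : M.ρ (M.ρ y) ≠ y := by
    intro h2
    have horb : ∀ n : ℕ, (M.ρ ^ n) y = y ∨ (M.ρ ^ n) y = M.ρ y := by
      intro n
      induction n with
      | zero => exact Or.inl rfl
      | succ n ih =>
        rcases ih with h | h
        · right; rw [pow_succ', Equiv.Perm.mul_apply, h]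
        · left; rw [pow_succ', Equiv.Perm.mul_apply, h, h2]
    obtain ⟨n, hn⟩ := vtx_exists_pow y a hav.symm
    rcases horb n with h | h <;> rw [hn] at h
    · exact hy1 (h ▸ ha)
    · apply hy3
      rw [← hry, ← h]
      exact ha
  -- distinctness of the six darts
  have h12 : a ≠ M.ρ a := by
    intro h; exact hfef (by rw [← ha, ← hra, ← h])
  have h13 : a ≠ M.ρ⁻¹ a := by
    intro h; exact hfef (by rw [← ha, ← hria, ← h])
  have h23 : M.ρ a ≠ M.ρ⁻¹ a := by
    intro h
    apply hkey a ha hav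
    rw [h, (Equiv.Perm.eq_inv_iff_eq.mp rfl : M.ρ (M.ρ⁻¹ a) = a)]
  have h14 : a ≠ x := fun h => hxfe (h ▸ ha)
  have h15 : a ≠ y := fun h => hy1 (h ▸ ha)
  have h16 : a ≠ M.ρ y := by
    intro h; apply hy3; rw [← hry, ← h]; exact ha
  have h24 : M.ρ a ≠ x := fun h => hx (h ▸ hra)
  have h25 : M.ρ a ≠ y := fun h => hy2 (h ▸ hra)
  have h26 : M.ρ a ≠ M.ρ y := by
    intro h; apply hy4; rw [← hry, ← h]; exact hra
  have h34 : M.ρ⁻¹ a ≠ x := fun h => hx (h ▸ hria)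
  have h35 : M.ρ⁻¹ a ≠ y := fun h => hy2 (h ▸ hria)
  have h36 : M.ρ⁻¹ a ≠ M.ρ y := by
    intro h; apply hy4; rw [← hry, ← h]; exact hria
  have h45 : x ≠ y := by
    intro h
    apply hkey2
    have h5 : y = M.ρ y := by
      conv_lhs => rw [← hrx]
      exact congrArg _ h
    rw [← h5, ← h5]
  have h46 : x ≠ M.ρ y := by
    intro h; apply hkey2; rw [← h]; exact hrx
  have h56 : y ≠ M.ρ y := by
    intro h; apply hkey2; rw [← h, ← h]
  set S : Finset M.D := {a, M.ρ a, M.ρ⁻¹ a, x, y, M.ρ y} with hSdef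
  have hvS : ∀ d ∈ S, M.vtx d = M.vtx y := by
    intro d hd
    simp only [hSdef, Finset.mem_insert, Finset.mem_singleton] at hd
    rcases hd with rfl | rfl | rfl | rfl | rfl | rfl
    · exact hav
    · rw [vtx_rho]; exact hav
    · rw [vtx_rho_inv]; exact hav
    · exact vtx_rho_inv y
    · rfl
    · exact vtx_rho y
  have hScard : S.card = 6 := by
    rw [hSdef]
    rw [Finset.card_insert_of_notMem (by simp [h12, h13, h14, h15, h16, -Equiv.Perm.coe_inv])]
    rw [Finset.card_insert_of_notMem (by simp [h23, h24, h25, h26, -Equiv.Perm.coe_inv])]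
    rw [Finset.card_insert_of_notMem (by simp [h34, h35, h36, -Equiv.Perm.coe_inv])]
    rw [Finset.card_insert_of_notMem (by simp [h45, h46])]
    rw [Finset.card_insert_of_notMem (by simp [h56])]
    rfl
  have himg : (S.image (fun d => M.vtx (M.σ d))).card = 6 := by
    rw [Finset.card_image_of_injOn, hScard]
    intro d hd d' hd' h
    exact ends_inj hsimp (by rw [hvS d hd, hvS d' hd']) h
  have hnot : M.vtx y ∉ S.image (fun d => M.vtx (M.σ d)) := by
    simp only [Finset.mem_image]
    rintro ⟨d, hd, hdv⟩
    exact hsimp.1 d (by rw [hvS d hd, ← hdv])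
  have h7 : 7 ≤ Nat.card M.Vertex := by
    letI : Fintype M.Vertex := Fintype.ofFinite _
    rw [Nat.card_eq_fintype_card]
    have hle := Finset.card_le_univ (insert (M.vtx y) (S.image (fun d => M.vtx (M.σ d))))
    rw [Finset.card_insert_of_notMem hnot, himg] at hle
    simpa using hle
  have hnv : M.nV = Nat.card M.Vertex := rfl
  omega

end CombMap
/-- There is no empty 6-circuit with at least 3 faces in which the spanning face
`f_e` shares edges with only one other face. -/
theorem no_empty_six_circuit_one_neighbour
    (M : CombMap) (fe f : M.Face)
    (hcirc : M.IsEmptyCircuit 6 fe)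
    (hF : 3 ≤ M.nF)
    (honly : ∀ d, M.fce d = fe → M.fce (M.σ d) = f) :
    False := by
  classical
  obtain ⟨hnV, hsz, hspan, hsimp, hloop, hmulti⟩ := hcirc
  letI : Fintype M.D := Fintype.ofFinite _
  letI : Fintype M.Face := Fintype.ofFinite _
  have hfe_ex : ∃ d, M.fce d = fe := by
    by_contra h
    push_neg at h
    have he : IsEmpty {d : M.D // M.fce d = fe} := ⟨fun ⟨d, hd⟩ => h d hd⟩
    have h0 : M.faceSize fe = 0 := Nat.card_of_isEmpty
    rw [hsz] at h0
    exact absurd h0 (by norm_num)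
  have hfef : fe ≠ f := by
    obtain ⟨d0, hd0⟩ := hfe_ex
    have h := hloop d0
    rw [hd0, honly d0 hd0] at h
    exact h
  set Gf : Finset M.Face := Finset.univ.filter (fun g => g ≠ fe ∧ g ≠ f) with hGf
  set U : Finset M.D := Finset.univ.filter
    (fun d => M.fce d ≠ fe ∧ M.fce d ≠ f) with hU
  set T : Finset M.D := Finset.univ.filter
    (fun d => M.fce d = f ∧ M.fce (M.σ d) ≠ fe) with hT
  set Uf : Finset M.D := Finset.univ.filter
    (fun d => M.fce d ≠ fe ∧ M.fce d ≠ f ∧ M.fce (M.σ d) = f) with hUf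
  set Ug : Finset M.D := Finset.univ.filter
    (fun d => M.fce d ≠ fe ∧ M.fce d ≠ f ∧ M.fce (M.σ d) ≠ fe ∧ M.fce (M.σ d) ≠ f)
    with hUg
  -- at least one face other than fe, f
  have hm : 1 ≤ Gf.card := by
    have hsub : (Finset.univ : Finset M.Face) ⊆ Gf ∪ {fe, f} := by
      intro g _
      by_cases h1 : g = fe
      · simp [h1]
      · by_cases h2 : g = f
        · simp [h2]
        · simp [hGf, h1, h2]
    have h1 := Finset.card_le_card hsub
    have h2 := Finset.card_union_le Gf ({fe, f} : Finset M.Face)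
    have h3 : ({fe, f} : Finset M.Face).card ≤ 2 :=
      le_trans (Finset.card_insert_le _ _) (by simp)
    have hnF : 3 ≤ (Finset.univ : Finset M.Face).card := by
      have : M.nF = Fintype.card M.Face := Nat.card_eq_fintype_card
      rw [Finset.card_univ]
      omega
    omega
  -- |Uf| ≤ |T|
  have hUf_le : Uf.card ≤ T.card := by
    apply Finset.card_le_card_of_injOn (fun d => M.σ d)
    · intro d hd
      simp only [Finset.mem_coe, hUf, Finset.mem_filter, Finset.mem_univ, true_and] at hd
      simp only [Finset.mem_coe, hT, Finset.mem_filter, Finset.mem_univ, true_and]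
      refine ⟨hd.2.2, ?_⟩
      rw [M.σ_invol]
      exact hd.1
    · intro d _ d' _ h
      exact M.σ.injective h
  -- |Ug| ≤ |T| using the key claim
  have hUg_le : Ug.card ≤ T.card := by
    apply Finset.card_le_card_of_injOn (fun d => M.ρ⁻¹ d)
    · intro d hd
      simp only [Finset.mem_coe, hUg, Finset.mem_filter, Finset.mem_univ, true_and] at hd
      simp only [Finset.mem_coe, hT, Finset.mem_filter, Finset.mem_univ, true_and]
      refine ⟨CombMap.claimC hnV hspan hsimp honly hfef hd.1 hd.2.1 hd.2.2.1 hd.2.2.2, ?_⟩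
      rw [CombMap.fce_sigma_rho_inv]
      exact hd.1
    · intro d _ d' _ h
      exact (M.ρ⁻¹).injective h
  -- |T| ≤ |Gf|
  have hT_le : T.card ≤ Gf.card := by
    apply Finset.card_le_card_of_injOn (fun d => M.fce (M.σ d))
    · intro d hd
      simp only [Finset.mem_coe, hT, Finset.mem_filter, Finset.mem_univ, true_and] at hd
      simp only [Finset.mem_coe, hGf, Finset.mem_filter, Finset.mem_univ, true_and]
      refine ⟨hd.2, ?_⟩
      intro h
      apply hloop d
      rw [hd.1, h]
    · intro d hd d' hd' h
      simp only [Finset.mem_coe, hT, Finset.mem_filter, Finset.mem_univ, true_and] at hd hd'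
      by_contra hne
      have hnsf : M.fce (M.σ d) ≠ f := by
        intro hh
        apply hloop d
        rw [hd.1, hh]
      have hedg : M.edg d ≠ M.edg d' := by
        intro he
        rcases CombMap.edg_cases d d' he with h1 | h1
        · exact hne h1.symm
        · apply hnsf
          rw [← h1]
          exact hd'.1
      rcases hmulti d d' (hd.1.trans hd'.1.symm) h hedg with h1 | h1
      · rw [hd.1] at h1
        exact hfef h1.symm
      · exact hd.2 h1
  -- U ⊆ Uf ∪ Ug
  have hUsub : U ⊆ Uf ∪ Ug := by
    intro d hd
    simp only [hU, Finset.mem_filter, Finset.mem_univ, true_and] at hd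
    have hsfe : M.fce (M.σ d) ≠ fe := by
      intro h
      exact hd.2 (CombMap.sigma_fe honly h)
    rw [Finset.mem_union]
    by_cases hsf : M.fce (M.σ d) = f
    · left
      simp only [hUf, Finset.mem_filter, Finset.mem_univ, true_and]
      exact ⟨hd.1, hd.2, hsf⟩
    · right
      simp only [hUg, Finset.mem_filter, Finset.mem_univ, true_and]
      exact ⟨hd.1, hd.2, hsfe, hsf⟩
  -- every face in Gf has at least three darts
  have hU3 : 3 * Gf.card ≤ U.card := by
    have hmemf : ∀ d ∈ U, M.fce d ∈ Gf := by
      intro d hd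
      simp only [hU, Finset.mem_filter, Finset.mem_univ, true_and] at hd
      simp only [hGf, Finset.mem_filter, Finset.mem_univ, true_and]
      exact hd
    rw [Finset.card_eq_sum_card_fiberwise hmemf]
    have : 3 * Gf.card = ∑ _g ∈ Gf, 3 := by
      rw [Finset.sum_const, smul_eq_mul, mul_comm]
    rw [this]
    apply Finset.sum_le_sum
    intro g hg
    simp only [hGf, Finset.mem_filter, Finset.mem_univ, true_and] at hg
    obtain ⟨d0, hd0⟩ : ∃ d, M.fce d = g := Quotient.exists_rep g
    have hmem : ∀ e : M.D, M.fce e = g → e ∈ U.filter (fun d => M.fce d = g) := by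
      intro e he
      simp only [hU, Finset.mem_filter, Finset.mem_univ, true_and]
      refine ⟨⟨?_, ?_⟩, he⟩
      · rw [he]; exact hg.1
      · rw [he]; exact hg.2
    have hsub3 : ({d0, M.φ d0, M.φ (M.φ d0)} : Finset M.D) ⊆
        U.filter (fun d => M.fce d = g) := by
      intro e he
      simp only [Finset.mem_insert, Finset.mem_singleton] at he
      rcases he with rfl | rfl | rfl
      · exact hmem _ hd0
      · exact hmem _ (by rw [CombMap.fce_phi]; exact hd0)
      · exact hmem _ (by rw [CombMap.fce_phi, CombMap.fce_phi]; exact hd0)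
    have hc3 : ({d0, M.φ d0, M.φ (M.φ d0)} : Finset M.D).card = 3 := by
      rw [Finset.card_insert_of_notMem (by
        simp [Ne.symm (CombMap.phi_ne hsimp d0),
          Ne.symm (CombMap.phi_phi_ne hsimp hloop d0)])]
      rw [Finset.card_insert_of_notMem (by
        simp [Ne.symm (CombMap.phi_ne hsimp (M.φ d0))])]
      rfl
    calc 3 = ({d0, M.φ d0, M.φ (M.φ d0)} : Finset M.D).card := hc3.symm
    _ ≤ _ := Finset.card_le_card hsub3
  have hU2 : U.card ≤ Uf.card + Ug.card :=
    le_trans (Finset.card_le_card hUsub) (Finset.card_union_le _ _)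
  omega
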